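/- In the free associative algebra K⟨X⟩ on variables x₁,…,xₙ, every automorphism fixing x₂,…,xₙ has the form x₁ ↦ αx₁ + f(x₂,…,xₙ), xⱼ ↦ xⱼ for j ≥ 2, where α is a nonzero scalar and f lies in the subalgebra generated by x₂,…,xₙ; in particular any such automorphism is tame (a product of elementary automorphisms). -/

import Mathlib

open FreeAlgebra

/-- An elementary automorphism of the free associative algebra K⟨x₁,…,xₙ⟩:
it sends some xⱼ to α xⱼ + f with α ∈ K*, f not depending on xⱼ, and fixes
all the other variables. -/
def IsElementaryAut (K : Type*) [Field K] (n : ℕ)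
    (φ : FreeAlgebra K (Fin n) ≃ₐ[K] FreeAlgebra K (Fin n)) : Prop :=
  ∃ (j : Fin n) (α : K) (f : FreeAlgebra K (Fin n)),
    α ≠ 0 ∧
    f ∈ Algebra.adjoin K (FreeAlgebra.ι K '' {i : Fin n | i ≠ j}) ∧
    φ (FreeAlgebra.ι K j) = α • FreeAlgebra.ι K j + f ∧
    ∀ i : Fin n, i ≠ j → φ (FreeAlgebra.ι K i) = FreeAlgebra.ι K i

open FreeAlgebra MonoidAlgebra
noncomputable section
namespace Stmt5Aux
variable (K : Type*) [Field K] (n : ℕ) (j : Fin n)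

abbrev Wn := FreeMonoid (Fin n)
abbrev Gn := MonoidAlgebra K (Wn n × Wn n)

def Pj : FreeAlgebra K (Fin n) →ₐ[K] FreeAlgebra K (Fin n) :=
  FreeAlgebra.lift K fun i => if i = j then 0 else FreeAlgebra.ι K i

def emb : Wn n →* FreeAlgebra K (Fin n) := FreeMonoid.lift (FreeAlgebra.ι K)

def Th : FreeAlgebra K (Fin n) →ₐ[K] Matrix (Fin 2) (Fin 2) (Gn K n) :=
  FreeAlgebra.lift K fun i => Matrix.of
    ![![MonoidAlgebra.single (FreeMonoid.of i, 1) 1, if i = j then 1 else 0],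
      ![0, MonoidAlgebra.single (1, FreeMonoid.of i) 1]]

def tL (a : FreeAlgebra K (Fin n)) : Gn K n := Th K n j a 0 0
def tR (a : FreeAlgebra K (Fin n)) : Gn K n := Th K n j a 1 1
def DD (a : FreeAlgebra K (Fin n)) : Gn K n := Th K n j a 0 1

variable {K n j}

lemma Th_apply_ι (i : Fin n) : Th K n j (FreeAlgebra.ι K i) = Matrix.of
    ![![MonoidAlgebra.single (FreeMonoid.of i, 1) 1, if i = j then 1 else 0],
      ![0, MonoidAlgebra.single (1, FreeMonoid.of i) 1]] := by
  simp [Th]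

lemma Th_lowleft (a : FreeAlgebra K (Fin n)) : Th K n j a 1 0 = 0 := by
  induction a using FreeAlgebra.induction with
  | grade0 r => simp [AlgHom.commutes, Matrix.algebraMap_matrix_apply]
  | grade1 i => simp [Th_apply_ι]
  | mul a b ha hb => simp [map_mul, Matrix.mul_apply, Fin.sum_univ_two, ha, hb]
  | add a b ha hb => simp [map_add, Matrix.add_apply, ha, hb]

lemma tL_mul (a b : FreeAlgebra K (Fin n)) : tL K n j (a * b) = tL K n j a * tL K n j b := by
  simp [tL, map_mul, Matrix.mul_apply, Fin.sum_univ_two, Th_lowleft]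

lemma tR_mul (a b : FreeAlgebra K (Fin n)) : tR K n j (a * b) = tR K n j a * tR K n j b := by
  simp [tR, map_mul, Matrix.mul_apply, Fin.sum_univ_two, Th_lowleft]

lemma DD_mul (a b : FreeAlgebra K (Fin n)) :
    DD K n j (a * b) = tL K n j a * DD K n j b + DD K n j a * tR K n j b := by
  simp [DD, tL, tR, map_mul, Matrix.mul_apply, Fin.sum_univ_two]

lemma DD_add (a b : FreeAlgebra K (Fin n)) :
    DD K n j (a + b) = DD K n j a + DD K n j b := by
  simp [DD, map_add, Matrix.add_apply]

lemma tL_add (a b : FreeAlgebra K (Fin n)) :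
    tL K n j (a + b) = tL K n j a + tL K n j b := by simp [tL, map_add, Matrix.add_apply]

lemma tR_add (a b : FreeAlgebra K (Fin n)) :
    tR K n j (a + b) = tR K n j a + tR K n j b := by simp [tR, map_add, Matrix.add_apply]

lemma tL_algebraMap (r : K) : tL K n j (algebraMap K _ r) = algebraMap K (Gn K n) r := by
  simp [tL, AlgHom.commutes, Matrix.algebraMap_matrix_apply]

lemma tR_algebraMap (r : K) : tR K n j (algebraMap K _ r) = algebraMap K (Gn K n) r := by
  simp [tR, AlgHom.commutes, Matrix.algebraMap_matrix_apply]

lemma DD_algebraMap (r : K) : DD K n j (algebraMap K _ r) = 0 := by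
  simp [DD, AlgHom.commutes, Matrix.algebraMap_matrix_apply]

lemma tL_ι (i : Fin n) : tL K n j (FreeAlgebra.ι K i) = MonoidAlgebra.single (FreeMonoid.of i, 1) 1 := by
  simp [tL, Th_apply_ι]

lemma tR_ι (i : Fin n) : tR K n j (FreeAlgebra.ι K i) = MonoidAlgebra.single (1, FreeMonoid.of i) 1 := by
  simp [tR, Th_apply_ι]

lemma DD_ι (i : Fin n) : DD K n j (FreeAlgebra.ι K i) = if i = j then 1 else 0 := by
  by_cases h : i = j <;> simp [DD, Th_apply_ι, h]

variable (K n j)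
def mu : Gn K n →ₗ[K] FreeAlgebra K (Fin n) :=
  Finsupp.linearCombination K (fun p : Wn n × Wn n =>
    emb K n p.1 * FreeAlgebra.ι K j * Pj K n j (emb K n p.2))
    ∘ₗ (MonoidAlgebra.coeffLinearEquiv K).toLinearMap

variable {K n j}

lemma mu_single (p : Wn n × Wn n) (c : K) :
    mu K n j (MonoidAlgebra.single p c)
      = c • (emb K n p.1 * FreeAlgebra.ι K j * Pj K n j (emb K n p.2)) :=
  by simp only [mu, LinearMap.comp_apply]; exact Finsupp.linearCombination_single _ _ _

lemma emb_of_mul (i : Fin n) (w : Wn n) :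
    emb K n (FreeMonoid.of i * w) = FreeAlgebra.ι K i * emb K n w := by
  simp [emb, map_mul]

lemma emb_mul_of (i : Fin n) (w : Wn n) :
    emb K n (w * FreeMonoid.of i) = emb K n w * FreeAlgebra.ι K i := by
  simp [emb, map_mul]

lemma Pj_ι (i : Fin n) :
    Pj K n j (FreeAlgebra.ι K i) = if i = j then 0 else FreeAlgebra.ι K i := by simp [Pj]

lemma muL : ∀ (a : FreeAlgebra K (Fin n)) (m : Gn K n),
    mu K n j (tL K n j a * m) = a * mu K n j m := by
  intro a
  induction a using FreeAlgebra.induction with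
  | grade0 r =>
    intro m
    rw [tL_algebraMap, ← Algebra.smul_def, ← Algebra.smul_def, map_smul]
  | grade1 i =>
    intro m
    induction m using MonoidAlgebra.induction with
    | zero => simp
    | single_add p c f _ _ ih =>
      rw [mul_add, map_add, map_add, mul_add, ih, tL_ι]
      congr 1
      rw [MonoidAlgebra.single_mul_single, one_mul, mu_single, mu_single]
      obtain ⟨w, s⟩ := p
      show c • (emb K n (FreeMonoid.of i * w) * _ * _) = _
      rw [emb_of_mul, mul_smul_comm, mul_assoc, mul_assoc]
      simp [mul_assoc]
  | mul a b ha hb =>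
    intro m
    rw [tL_mul, mul_assoc, ha, hb, mul_assoc]
  | add a b ha hb =>
    intro m
    rw [tL_add, add_mul, map_add, ha, hb, add_mul]

lemma muR : ∀ (b : FreeAlgebra K (Fin n)) (m : Gn K n),
    mu K n j (m * tR K n j b) = mu K n j m * Pj K n j b := by
  intro b
  induction b using FreeAlgebra.induction with
  | grade0 r =>
    intro m
    rw [tR_algebraMap, ← Algebra.commutes, ← Algebra.smul_def, map_smul, AlgHom.commutes,
      ← Algebra.commutes, ← Algebra.smul_def]
  | grade1 i =>
    intro m
    induction m using MonoidAlgebra.induction with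
    | zero => simp
    | single_add p c f _ _ ih =>
      rw [add_mul, map_add, map_add, add_mul, ih, tR_ι]
      congr 1
      rw [MonoidAlgebra.single_mul_single, mul_one, mu_single, mu_single]
      obtain ⟨w, s⟩ := p
      show c • (_ * _ * Pj K n j (emb K n (s * FreeMonoid.of i))) = _
      rw [emb_mul_of, map_mul, smul_mul_assoc, mul_assoc]
      simp [mul_assoc]
  | mul a b ha hb =>
    intro m
    rw [tR_mul, ← mul_assoc, hb, ha, map_mul, mul_assoc]
  | add a b ha hb =>
    intro m
    rw [tR_add, mul_add, map_add, ha, hb, map_add, mul_add]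

lemma fox (a : FreeAlgebra K (Fin n)) :
    mu K n j (DD K n j a) = a - Pj K n j a := by
  induction a using FreeAlgebra.induction with
  | grade0 r => rw [DD_algebraMap, map_zero, AlgHom.commutes, sub_self]
  | grade1 i =>
    rw [DD_ι, Pj_ι]
    by_cases h : i = j
    · subst h
      rw [if_pos rfl, if_pos rfl, sub_zero, MonoidAlgebra.one_def, mu_single, one_smul]
      simp
    · rw [if_neg h, if_neg h, map_zero, sub_self]
  | mul a b ha hb =>
    rw [DD_mul, map_add, muL, muR, ha, hb, map_mul]
    rw [mul_sub, sub_mul]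
    abel
  | add a b ha hb =>
    rw [DD_add, map_add, ha, hb, map_add]
    abel

variable (K n)

def act (p q : Wn n × Wn n) : Wn n × Wn n := (p.1 * q.1, q.2 * p.2)

variable (j) in
def star (E m : Gn K n) : Gn K n :=
  E.coeff.sum fun p c => m.coeff.sum fun q d => MonoidAlgebra.single (act n p q) (c * d)

variable {K n}

lemma star_zero_left (m : Gn K n) : star K n 0 m = 0 := Finsupp.sum_zero_index

lemma star_zero_right (E : Gn K n) : star K n E 0 = 0 := by
  simp [star, Finsupp.sum_zero_index]

lemma star_single_single (p q : Wn n × Wn n) (c d : K) :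
    star K n (MonoidAlgebra.single p c) (MonoidAlgebra.single q d)
      = MonoidAlgebra.single (act n p q) (c * d) := by
  unfold star
  simp only [MonoidAlgebra.coeff_single]
  rw [Finsupp.sum_single_index, Finsupp.sum_single_index]
  · simp
  · simp [Finsupp.sum_single_index]

lemma star_add_left (E E' m : Gn K n) :
    star K n (E + E') m = star K n E m + star K n E' m := by
  unfold star
  rw [MonoidAlgebra.coeff_add]
  apply Finsupp.sum_add_index' <;> simp [add_mul, Finsupp.sum_add]

lemma star_add_right (E m m' : Gn K n) :
    star K n E (m + m') = star K n E m + star K n E m' := by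
  unfold star
  have h : ∀ (p : Wn n × Wn n) (c : K),
      (Finsupp.sum (m + m').coeff fun q d => MonoidAlgebra.single (act n p q) (c * d))
        = (Finsupp.sum m.coeff fun q d => MonoidAlgebra.single (act n p q) (c * d))
          + (Finsupp.sum m'.coeff fun q d => MonoidAlgebra.single (act n p q) (c * d)) := by
    intro p c
    rw [MonoidAlgebra.coeff_add]
    apply Finsupp.sum_add_index' <;> simp [mul_add]
  simp only [h]
  exact Finsupp.sum_add

lemma star_smul_left (c : K) (E m : Gn K n) :
    star K n (c • E) m = c • star K n E m := by
  unfold star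
  rw [MonoidAlgebra.coeff_smul, Finsupp.smul_sum, Finsupp.sum_smul_index (fun p => by simp)]
  apply Finsupp.sum_congr
  intro p _
  rw [Finsupp.smul_sum]
  apply Finsupp.sum_congr
  intro q _
  rw [MonoidAlgebra.smul_single, smul_eq_mul, mul_assoc]

lemma star_one_left (m : Gn K n) : star K n (MonoidAlgebra.single (1,1) 1) m = m := by
  unfold star
  rw [MonoidAlgebra.coeff_single, Finsupp.sum_single_index]
  · simp only [act, one_mul, mul_one, one_mul]
    exact MonoidAlgebra.sum_coeff_single m
  · simp

lemma star_singleL_single (w : Wn n) (c : K) (p : Wn n × Wn n) (cp : K) (m : Gn K n) :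
    MonoidAlgebra.single ((w, 1) : Wn n × Wn n) c * star K n (MonoidAlgebra.single p cp) m
      = star K n (MonoidAlgebra.single ((w, 1) : Wn n × Wn n) c * MonoidAlgebra.single p cp) m := by
  induction m using MonoidAlgebra.induction with
  | zero => simp only [star_zero_right, mul_zero]
  | single_add q d g hq hd ihm =>
    rw [star_add_right, mul_add, ihm, star_add_right]
    congr 1
    rw [star_single_single, MonoidAlgebra.single_mul_single,
      MonoidAlgebra.single_mul_single, star_single_single]
    apply congrArg₂
    · obtain ⟨w1, w2⟩ := p; obtain ⟨q1, q2⟩ := q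
      simp [act, Prod.mk_mul_mk, mul_assoc]
    · rw [mul_assoc]

lemma star_singleL (w : Wn n) (c : K) (E m : Gn K n) :
    MonoidAlgebra.single ((w, 1) : Wn n × Wn n) c * star K n E m
      = star K n (MonoidAlgebra.single ((w, 1) : Wn n × Wn n) c * E) m := by
  induction E using MonoidAlgebra.induction with
  | zero => simp only [mul_zero, star_zero_left]
  | single_add p cp f hp hcp ih =>
    rw [mul_add, star_add_left, mul_add, star_add_left, ih, star_singleL_single]

lemma star_singleR_single (s : Wn n) (c : K) (p : Wn n × Wn n) (cp : K) (m : Gn K n) :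
    star K n (MonoidAlgebra.single p cp) m * MonoidAlgebra.single ((1, s) : Wn n × Wn n) c
      = star K n (MonoidAlgebra.single p cp * MonoidAlgebra.single ((1, s) : Wn n × Wn n) c) m := by
  induction m using MonoidAlgebra.induction with
  | zero => simp only [star_zero_right, zero_mul]
  | single_add q d g hq hd ihm =>
    rw [star_add_right, add_mul, ihm, star_add_right]
    congr 1
    rw [star_single_single, MonoidAlgebra.single_mul_single,
      MonoidAlgebra.single_mul_single, star_single_single]
    apply congrArg₂
    · obtain ⟨w1, w2⟩ := p; obtain ⟨q1, q2⟩ := q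
      simp [act, Prod.mk_mul_mk, mul_assoc]
    · rw [mul_assoc, mul_comm d c, ← mul_assoc]

lemma star_singleR (s : Wn n) (c : K) (E m : Gn K n) :
    star K n E m * MonoidAlgebra.single ((1, s) : Wn n × Wn n) c
      = star K n (E * MonoidAlgebra.single ((1, s) : Wn n × Wn n) c) m := by
  induction E using MonoidAlgebra.induction with
  | zero => simp only [zero_mul, star_zero_left]
  | single_add p cp f hp hcp ih =>
    rw [add_mul, star_add_left, add_mul, star_add_left, ih, star_singleR_single]

lemma star_mulL (f : Gn K n) (hf : ∀ p ∈ f.coeff.support, p.2 = 1) (E m : Gn K n) :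
    f * star K n E m = star K n (f * E) m := by
  classical
  induction f using MonoidAlgebra.induction with
  | zero => rw [zero_mul, zero_mul, star_zero_left]
  | single_add p cp g hp hcp ih =>
    have hsup : (MonoidAlgebra.single p cp + g).coeff.support = insert p g.coeff.support := by
      classical
      rw [MonoidAlgebra.coeff_add, MonoidAlgebra.coeff_single, Finsupp.support_add_eq, Finsupp.support_single_ne_zero _ hcp]
      · ext x; simp [or_comm]
      · rw [Finsupp.support_single_ne_zero _ hcp]
        simpa using hp
    have hp2 : p.2 = 1 := hf p (by rw [hsup]; exact Finset.mem_insert_self _ _)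
    have hg : ∀ q ∈ g.coeff.support, q.2 = 1 := fun q hq =>
      hf q (by rw [hsup]; exact Finset.mem_insert_of_mem hq)
    obtain ⟨w, s⟩ := p
    obtain rfl : s = 1 := hp2
    rw [add_mul, add_mul, star_add_left, ih hg, star_singleL]

lemma star_mulR (f : Gn K n) (hf : ∀ p ∈ f.coeff.support, p.1 = 1) (E m : Gn K n) :
    star K n E m * f = star K n (E * f) m := by
  classical
  induction f using MonoidAlgebra.induction with
  | zero => rw [mul_zero, mul_zero, star_zero_left]
  | single_add p cp g hp hcp ih =>
    have hsup : (MonoidAlgebra.single p cp + g).coeff.support = insert p g.coeff.support := by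
      classical
      rw [MonoidAlgebra.coeff_add, MonoidAlgebra.coeff_single, Finsupp.support_add_eq, Finsupp.support_single_ne_zero _ hcp]
      · ext x; simp [or_comm]
      · rw [Finsupp.support_single_ne_zero _ hcp]
        simpa using hp
    have hp1 : p.1 = 1 := hf p (by rw [hsup]; exact Finset.mem_insert_self _ _)
    have hg : ∀ q ∈ g.coeff.support, q.1 = 1 := fun q hq =>
      hf q (by rw [hsup]; exact Finset.mem_insert_of_mem hq)
    obtain ⟨w, s⟩ := p
    obtain rfl : w = 1 := hp1
    rw [mul_add, mul_add, star_add_left, ih hg, star_singleR]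

lemma supp_tL (a : FreeAlgebra K (Fin n)) :
    ∀ p ∈ (tL K n j a).coeff.support, p.2 = 1 := by
  classical
  induction a using FreeAlgebra.induction with
  | grade0 r =>
    intro p hp
    rw [tL_algebraMap, Algebra.algebraMap_eq_smul_one, MonoidAlgebra.one_def,
      MonoidAlgebra.coeff_smul, MonoidAlgebra.coeff_single] at hp
    have := Finsupp.support_smul hp
    have := Finsupp.support_single_subset this
    simp only [Finset.mem_singleton] at this
    rw [this]
    rfl
  | grade1 i =>
    intro p hp
    rw [tL_ι, MonoidAlgebra.coeff_single] at hp
    have := Finsupp.support_single_subset hp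
    simp only [Finset.mem_singleton] at this
    rw [this]
  | mul a b ha hb =>
    intro p hp
    rw [tL_mul] at hp
    have := MonoidAlgebra.support_coeff_mul_subset _ _ hp
    rw [Finset.mem_mul] at this
    obtain ⟨x, hx, y, hy, hxy⟩ := this
    have : p.2 = x.2 * y.2 := by rw [← hxy]; rfl
    rw [this, ha x hx, hb y hy, one_mul]
  | add a b ha hb =>
    intro p hp
    rw [tL_add, MonoidAlgebra.coeff_add] at hp
    rcases Finset.mem_union.mp (Finsupp.support_add hp) with h | h
    · exact ha p h
    · exact hb p h

lemma supp_tR (a : FreeAlgebra K (Fin n)) :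
    ∀ p ∈ (tR K n j a).coeff.support, p.1 = 1 := by
  classical
  induction a using FreeAlgebra.induction with
  | grade0 r =>
    intro p hp
    rw [tR_algebraMap, Algebra.algebraMap_eq_smul_one, MonoidAlgebra.one_def,
      MonoidAlgebra.coeff_smul, MonoidAlgebra.coeff_single] at hp
    have := Finsupp.support_smul hp
    have := Finsupp.support_single_subset this
    simp only [Finset.mem_singleton] at this
    rw [this]
    rfl
  | grade1 i =>
    intro p hp
    rw [tR_ι, MonoidAlgebra.coeff_single] at hp
    have := Finsupp.support_single_subset hp
    simp only [Finset.mem_singleton] at this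
    rw [this]
  | mul a b ha hb =>
    intro p hp
    rw [tR_mul] at hp
    have := MonoidAlgebra.support_coeff_mul_subset _ _ hp
    rw [Finset.mem_mul] at this
    obtain ⟨x, hx, y, hy, hxy⟩ := this
    have : p.1 = x.1 * y.1 := by rw [← hxy]; rfl
    rw [this, ha x hx, hb y hy, one_mul]
  | add a b ha hb =>
    intro p hp
    rw [tR_add, MonoidAlgebra.coeff_add] at hp
    rcases Finset.mem_union.mp (Finsupp.support_add hp) with h | h
    · exact ha p h
    · exact hb p h

lemma exists_star (φ : FreeAlgebra K (Fin n) ≃ₐ[K] FreeAlgebra K (Fin n))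
    (hfix : ∀ i : Fin n, i ≠ j → φ (FreeAlgebra.ι K i) = FreeAlgebra.ι K i)
    (a : FreeAlgebra K (Fin n)) :
    ∃ E : Gn K n, DD K n j (φ a) = star K n E (DD K n j (φ (FreeAlgebra.ι K j))) := by
  induction a using FreeAlgebra.induction with
  | grade0 r => exact ⟨0, by rw [AlgEquiv.commutes, DD_algebraMap, star_zero_left]⟩
  | grade1 i =>
    by_cases h : i = j
    · subst h
      exact ⟨MonoidAlgebra.single (1, 1) 1, (star_one_left _).symm⟩
    · exact ⟨0, by rw [hfix i h, DD_ι, if_neg h, star_zero_left]⟩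
  | mul a b ha hb =>
    obtain ⟨Ea, hEa⟩ := ha
    obtain ⟨Eb, hEb⟩ := hb
    refine ⟨tL K n j (φ a) * Eb + Ea * tR K n j (φ b), ?_⟩
    rw [map_mul, DD_mul, hEa, hEb, star_mulL _ (supp_tL _) _ _,
      star_mulR _ (supp_tR _) _ _, star_add_left]
  | add a b ha hb =>
    obtain ⟨Ea, hEa⟩ := ha
    obtain ⟨Eb, hEb⟩ := hb
    exact ⟨Ea + Eb, by rw [map_add, DD_add, hEa, hEb, star_add_left]⟩

attribute [local instance] Classical.decEq

lemma star_apply' (E m : Gn K n) (x : Wn n × Wn n) :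
    (star K n E m).coeff x
      = E.coeff.sum fun p c => m.coeff.sum fun q d => if act n p q = x then c * d else 0 := by
  classical
  unfold star
  rw [MonoidAlgebra.coeff_finsuppSum, Finsupp.sum_apply]
  apply Finsupp.sum_congr
  intro p _
  rw [MonoidAlgebra.coeff_finsuppSum, Finsupp.sum_apply]
  apply Finsupp.sum_congr
  intro q _
  exact Finsupp.single_apply

def ee : Wn n × Wn n → Wn n × (Wn n)ᵐᵒᵖ := fun p => (p.1, MulOpposite.op p.2)

lemma ee_inj : Function.Injective (ee (n := n)) := by
  intro p q h
  obtain ⟨h1, h2⟩ := Prod.mk.injEq .. ▸ h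
  exact Prod.ext h1 (MulOpposite.op_injective h2)

lemma ee_mul (p q : Wn n × Wn n) : ee (act n p q) = ee p * ee q := by
  simp [ee, act, Prod.mk_mul_mk]

lemma fm_mul_eq_one {a b : Wn n} (h : a * b = 1) : a = 1 ∧ b = 1 := by
  have h' : FreeMonoid.toList a ++ FreeMonoid.toList b = [] := h
  rw [List.append_eq_nil_iff] at h'
  exact ⟨FreeMonoid.toList.injective (by simpa using h'.1),
    FreeMonoid.toList.injective (by simpa using h'.2)⟩

lemma act_eq_one {p q : Wn n × Wn n} (h : act n p q = (1, 1)) : p = (1, 1) ∧ q = (1, 1) := by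
  have h1 : p.1 * q.1 = 1 := congrArg Prod.fst h
  have h2 : q.2 * p.2 = 1 := congrArg Prod.snd h
  obtain ⟨ha, hb⟩ := fm_mul_eq_one h1
  obtain ⟨hc, hd⟩ := fm_mul_eq_one h2
  exact ⟨Prod.ext ha hd, Prod.ext hb hc⟩

lemma star_eval (E m : Gn K n) {p0 q0 : Wn n × Wn n}
    (hp0 : p0 ∈ E.coeff.support) (hq0 : q0 ∈ m.coeff.support)
    (hu : UniqueMul (E.coeff.support.image ee) (m.coeff.support.image ee) (ee p0) (ee q0)) :
    (star K n E m).coeff (act n p0 q0) = E.coeff p0 * m.coeff q0 := by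
  classical
  rw [star_apply']
  unfold Finsupp.sum
  rw [Finset.sum_eq_single p0]
  · dsimp only
    rw [Finset.sum_eq_single q0]
    · rw [if_pos rfl]
    · intro q hq hqq
      rw [if_neg]
      intro hcon
      have : ee p0 * ee q = ee p0 * ee q0 := by rw [← ee_mul, ← ee_mul, hcon]
      have := (hu (Finset.mem_image_of_mem _ hp0) (Finset.mem_image_of_mem _ hq) this).2
      exact hqq (ee_inj this)
    · intro h; exact absurd hq0 h
  · intro p hp hpp
    apply Finset.sum_eq_zero
    intro q hq
    dsimp only
    rw [if_neg]
    intro hcon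
    have : ee p * ee q = ee p0 * ee q0 := by rw [← ee_mul, ← ee_mul, hcon]
    have := (hu (Finset.mem_image_of_mem _ hp) (Finset.mem_image_of_mem _ hq) this).1
    exact hpp (ee_inj this)
  · intro h; exact absurd hp0 h

lemma supp_of_star_eq_one (E m : Gn K n) (h : star K n E m = 1) :
    ∀ q ∈ m.coeff.support, q = ((1 : Wn n), (1 : Wn n)) := by
  classical
  have hone : (1 : Gn K n).coeff = Finsupp.single (1, 1) 1 := rfl
  have hE0 : E ≠ 0 := by
    rintro rfl
    rw [star_zero_left] at h
    exact one_ne_zero h.symm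
  have hm0 : m ≠ 0 := by
    rintro rfl
    rw [star_zero_right] at h
    exact one_ne_zero h.symm
  set A := E.coeff.support.image (ee (n := n)) with hA
  set B := m.coeff.support.image (ee (n := n)) with hB
  have hAne : A.Nonempty := (Finsupp.support_nonempty_iff.mpr fun h => hE0 (MonoidAlgebra.coeff_eq_zero.mp h)).image _
  have hBne : B.Nonempty := (Finsupp.support_nonempty_iff.mpr fun h => hm0 (MonoidAlgebra.coeff_eq_zero.mp h)).image _
  have key : ∀ p0 ∈ E.coeff.support, ∀ q0 ∈ m.coeff.support,
      UniqueMul A B (ee p0) (ee q0) → q0 = ((1 : Wn n), (1 : Wn n)) ∧ p0 = (1, 1) := by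
    intro p0 hp0 q0 hq0 hu
    have hval : (star K n E m).coeff (act n p0 q0) = E.coeff p0 * m.coeff q0 := star_eval E m hp0 hq0 hu
    have hne : (star K n E m).coeff (act n p0 q0) ≠ 0 := by
      rw [hval]
      exact mul_ne_zero (Finsupp.mem_support_iff.mp hp0) (Finsupp.mem_support_iff.mp hq0)
    rw [h] at hne
    have hact : act n p0 q0 = (1, 1) := by
      by_contra hcon
      rw [hone, Finsupp.single_eq_of_ne' (Ne.symm hcon)] at hne
      exact hne rfl
    obtain ⟨h1, h2⟩ := act_eq_one hact
    exact ⟨h2, h1⟩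
  rcases lt_or_ge 1 (A.card * B.card) with hc | hc
  · obtain ⟨p1, hp1, p2, hp2, hne, hu1, hu2⟩ := TwoUniqueProds.uniqueMul_of_one_lt_card hc
    rw [Finset.mem_product] at hp1 hp2
    obtain ⟨pa, hpa, hpa'⟩ := Finset.mem_image.mp hp1.1
    obtain ⟨qa, hqa, hqa'⟩ := Finset.mem_image.mp hp1.2
    obtain ⟨pb, hpb, hpb'⟩ := Finset.mem_image.mp hp2.1
    obtain ⟨qb, hqb, hqb'⟩ := Finset.mem_image.mp hp2.2
    rw [← hpa', ← hqa'] at hu1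
    rw [← hpb', ← hqb'] at hu2
    obtain ⟨hqa1, hpa1⟩ := key pa hpa qa hqa hu1
    obtain ⟨hqb1, hpb1⟩ := key pb hpb qb hqb hu2
    exfalso
    apply hne
    have e1 : p1 = (ee pa, ee qa) := by rw [hpa', hqa']
    have e2 : p2 = (ee pb, ee qb) := by rw [hpb', hqb']
    rw [e1, e2, hpa1, hqa1, hpb1, hqb1]
  · have hA1 : A.card = 1 := le_antisymm (by
      have := hBne.card_pos
      nlinarith [hAne.card_pos]) hAne.card_pos
    have hB1 : B.card = 1 := le_antisymm (by nlinarith [hAne.card_pos, hBne.card_pos]) hBne.card_pos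
    have hmcard : m.coeff.support.card = 1 := by
      rw [← Finset.card_image_of_injective _ (ee_inj (n := n)), ← hB, hB1]
    obtain ⟨q0, hq0⟩ := Finset.card_eq_one.mp hmcard
    have hEcard : E.coeff.support.card = 1 := by
      rw [← Finset.card_image_of_injective _ (ee_inj (n := n)), ← hA, hA1]
    obtain ⟨p0, hp0⟩ := Finset.card_eq_one.mp hEcard
    have hm : m = MonoidAlgebra.single q0 (m.coeff q0) := by
      have := (Finsupp.support_eq_singleton.mp hq0).2
      exact MonoidAlgebra.coeff_injective this
    have hEe : E = MonoidAlgebra.single p0 (E.coeff p0) :=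
      MonoidAlgebra.coeff_injective (Finsupp.support_eq_singleton.mp hp0).2
    have : star K n E m = MonoidAlgebra.single (act n p0 q0) (E.coeff p0 * m.coeff q0) := by
      conv_lhs => rw [hEe, hm]
      exact star_single_single (K := K) (n := n) p0 q0 (E.coeff p0) (m.coeff q0)
    rw [this, MonoidAlgebra.one_def] at h
    rcases MonoidAlgebra.single_inj.mp h with ⟨hac, _⟩ | ⟨hz, _⟩
    · intro q hq
      rw [hq0] at hq
      rw [Finset.mem_singleton.mp hq]
      exact (act_eq_one hac).2
    · exfalso
      have hp0' := (Finsupp.support_eq_singleton.mp hp0).1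
      have hq0' := (Finsupp.support_eq_singleton.mp hq0).1
      exact mul_ne_zero hp0' hq0' hz

lemma Pj_mem (a : FreeAlgebra K (Fin n)) :
    Pj K n j a ∈ Algebra.adjoin K (FreeAlgebra.ι K '' {i : Fin n | i ≠ j}) := by
  induction a using FreeAlgebra.induction with
  | grade0 r =>
    rw [AlgHom.commutes]
    exact Subalgebra.algebraMap_mem _ _
  | grade1 i =>
    rw [Pj_ι]
    by_cases h : i = j
    · rw [if_pos h]; exact Subalgebra.zero_mem _
    · rw [if_neg h]
      exact Algebra.subset_adjoin ⟨i, h, rfl⟩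
  | mul a b ha hb => rw [map_mul]; exact Subalgebra.mul_mem _ ha hb
  | add a b ha hb => rw [map_add]; exact Subalgebra.add_mem _ ha hb

lemma key_lemma (φ : FreeAlgebra K (Fin n) ≃ₐ[K] FreeAlgebra K (Fin n))
    (hfix : ∀ i : Fin n, i ≠ j → φ (FreeAlgebra.ι K i) = FreeAlgebra.ι K i) :
    ∃ (α : K) (f : FreeAlgebra K (Fin n)),
      α ≠ 0 ∧
      f ∈ Algebra.adjoin K (FreeAlgebra.ι K '' {i : Fin n | i ≠ j}) ∧
      φ (FreeAlgebra.ι K j) = α • FreeAlgebra.ι K j + f := by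
  classical
  obtain ⟨E, hE⟩ := exists_star (j := j) φ hfix (φ.symm (FreeAlgebra.ι K j))
  rw [AlgEquiv.apply_symm_apply, DD_ι, if_pos rfl] at hE
  set u := φ (FreeAlgebra.ι K j) with hu
  set Du := DD K n j u with hDu
  have hsupp := supp_of_star_eq_one E Du hE.symm
  have hDus : Du = MonoidAlgebra.single (1, 1) (Du.coeff (1, 1)) := by
    apply MonoidAlgebra.ext
    apply Finsupp.ext
    intro q
    rw [MonoidAlgebra.coeff_single]
    by_cases hq : q = ((1 : Wn n), (1 : Wn n))
    · subst hq; rw [Finsupp.single_eq_same]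
    · rw [Finsupp.single_eq_of_ne' (Ne.symm hq)]
      by_contra hne
      exact hq (hsupp q (Finsupp.mem_support_iff.mpr hne))
  set c := Du.coeff (1, 1) with hc
  have hc0 : c ≠ 0 := by
    intro h0
    have hDu0 : Du = 0 := by rw [hDus, h0]; simp
    rw [hDu0, star_zero_right] at hE
    exact one_ne_zero hE
  have hfox := fox (j := j) u
  rw [← hDu, hDus, mu_single] at hfox
  have hmu : c • (emb K n 1 * FreeAlgebra.ι K j * Pj K n j (emb K n 1)) = c • FreeAlgebra.ι K j := by
    rw [map_one, map_one, one_mul, mul_one]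
  rw [hmu] at hfox
  exact ⟨c, Pj K n j u, hc0, Pj_mem u, by
    rw [← sub_eq_iff_eq_add] at *
    exact hfox ▸ rfl⟩

end Stmt5Aux

/-- Every automorphism of K⟨x₁,…,xₙ⟩ fixing x₂,…,xₙ has the form
x₁ ↦ α x₁ + f(x₂,…,xₙ) with α ≠ 0 and f in the subalgebra generated by the
remaining variables; in particular it is tame (a product of elementary
automorphisms). -/
theorem stmt_5 (K : Type*) [Field K] [CharZero K] (n : ℕ) (hn : 0 < n)
    (φ : FreeAlgebra K (Fin n) ≃ₐ[K] FreeAlgebra K (Fin n))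
    (hfix : ∀ i : Fin n, i ≠ ⟨0, hn⟩ → φ (FreeAlgebra.ι K i) = FreeAlgebra.ι K i) :
    (∃ (α : K) (f : FreeAlgebra K (Fin n)),
        α ≠ 0 ∧
        f ∈ Algebra.adjoin K (FreeAlgebra.ι K '' {i : Fin n | i ≠ ⟨0, hn⟩}) ∧
        φ (FreeAlgebra.ι K ⟨0, hn⟩) = α • FreeAlgebra.ι K ⟨0, hn⟩ + f) ∧
    φ ∈ Subgroup.closure {ψ | IsElementaryAut K n ψ} := by
  obtain ⟨α, f, hα, hf, hform⟩ := Stmt5Aux.key_lemma (j := ⟨0, hn⟩) φ hfix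
  exact ⟨⟨α, f, hα, hf, hform⟩,
    Subgroup.subset_closure ⟨⟨0, hn⟩, α, f, hα, hf, hform, hfix⟩⟩
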